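/- Define p_1 = 1/e_1 and, recursively for m ≥ 1, p_{2m+1} = -(1/e_1) Σ_{k=0}^{m-1} Σ_{n=1}^{m} p_{2k+1} e_{2n+1} δ_{(2k+1)(2n+1), 2m+1}. Then p_{2m+1} = (1/e_1) Σ_{ℓ_3, ℓ_5, ...} [(ℓ_3+ℓ_5+⋯)!/(ℓ_3! ℓ_5! ⋯)] (-e_3/e_1)^{ℓ_3} (-e_5/e_1)^{ℓ_5} ⋯, where the finite sum runs over all tuples of nonnegative integers (ℓ_3, ℓ_5, ℓ_7, ...) with 3^{ℓ_3} 5^{ℓ_5} 7^{ℓ_7} ⋯ = 2m+1. -/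

import Mathlib

open Finset

/-- The set of admissible multi-indices for `2*m+1`. -/
private def AA (m : ℕ) : Set (ℕ →₀ ℕ) :=
  {ℓ : ℕ →₀ ℕ | (∀ n ∈ ℓ.support, 1 ≤ n)
            ∧ (ℓ.prod fun n k => (2 * n + 1) ^ k) = 2 * m + 1}

private lemma sub_add_single {ℓ : ℕ →₀ ℕ} {n : ℕ} (hn : n ∈ ℓ.support) :
    (ℓ - Finsupp.single n 1) + Finsupp.single n 1 = ℓ := by
  ext i
  simp only [Finsupp.add_apply, Finsupp.tsub_apply, Finsupp.single_apply]
  rcases eq_or_ne n i with rfl | h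
  · have : 1 ≤ ℓ n := Nat.one_le_iff_ne_zero.2 (Finsupp.mem_support_iff.1 hn)
    simp; omega
  · simp [h]

private lemma prod_pow_sub_single {M : Type*} [CommMonoid M] (h : ℕ → M) {ℓ : ℕ →₀ ℕ} {n : ℕ}
    (hn : n ∈ ℓ.support) :
    ℓ.prod (fun i k => h i ^ k) = h n * (ℓ - Finsupp.single n 1).prod (fun i k => h i ^ k) := by
  conv_lhs => rw [← sub_add_single hn]
  rw [Finsupp.prod_add_index (fun a _ => pow_zero (h a)) (fun a _ b₁ b₂ => pow_add (h a) b₁ b₂),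
    mul_comm]
  congr 1
  simp [Finsupp.prod_single_index]

private lemma multinomial_rec (ℓ : ℕ →₀ ℕ) (hℓ : ℓ ≠ 0) :
    ℓ.multinomial = ∑ n ∈ ℓ.support, (ℓ - Finsupp.single n 1).multinomial := by
  classical
  have hP : 0 < ∏ i ∈ ℓ.support, (ℓ i).factorial :=
    Finset.prod_pos (fun i _ => Nat.factorial_pos _)
  refine Nat.eq_of_mul_eq_mul_left hP ?_
  have hone : 1 ≤ ∑ i ∈ ℓ.support, ℓ i := by
    obtain ⟨n, hn⟩ := Finsupp.support_nonempty_iff.2 hℓ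
    have := Nat.pos_of_ne_zero (Finsupp.mem_support_iff.1 hn)
    calc 1 ≤ ℓ n := this
    _ ≤ ∑ i ∈ ℓ.support, ℓ i := Finset.single_le_sum (fun i _ => Nat.zero_le _) hn
  have key : ∀ n ∈ ℓ.support,
      (∏ i ∈ ℓ.support, (ℓ i).factorial) * (ℓ - Finsupp.single n 1).multinomial
        = ℓ n * ((∑ i ∈ ℓ.support, ℓ i) - 1).factorial := by
    intro n hn
    set ℓ' := ℓ - Finsupp.single n 1 with hℓ'
    have happ : ∀ i, ℓ' i = ℓ i - (if n = i then 1 else 0) := by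
      intro i; simp [hℓ', Finsupp.tsub_apply, Finsupp.single_apply]
    have hpos : 0 < ℓ n := Nat.pos_of_ne_zero (Finsupp.mem_support_iff.1 hn)
    have hsub : ℓ'.support ⊆ ℓ.support := Finsupp.support_tsub
    have happn : ℓ' n = ℓ n - 1 := by rw [happ]; simp
    have happne : ∀ i, n ≠ i → ℓ' i = ℓ i := by
      intro i hi; rw [happ]; simp [hi]
    have hprod1 : ∏ i ∈ ℓ'.support, (ℓ' i).factorial = ∏ i ∈ ℓ.support, (ℓ' i).factorial := by
      refine Finset.prod_subset hsub (fun i _ hi => ?_)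
      simp [Finsupp.notMem_support_iff.1 hi]
    have hfac : ∏ i ∈ ℓ.support, (ℓ i).factorial
        = ℓ n * ∏ i ∈ ℓ.support, (ℓ' i).factorial := by
      rw [← Finset.mul_prod_erase _ _ hn, ← Finset.mul_prod_erase _ (fun i => (ℓ' i).factorial) hn]
      have h1 : ∀ i ∈ ℓ.support.erase n, (ℓ' i).factorial = (ℓ i).factorial := by
        intro i hi
        rw [happne i (Ne.symm (Finset.mem_erase.1 hi).1)]
      rw [Finset.prod_congr rfl h1, happn, ← mul_assoc, Nat.mul_factorial_pred hpos.ne']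
    have hsum : ∑ i ∈ ℓ'.support, ℓ' i = (∑ i ∈ ℓ.support, ℓ i) - 1 := by
      have h2 : ∑ i ∈ ℓ'.support, ℓ' i = ∑ i ∈ ℓ.support, ℓ' i :=
        Finset.sum_subset hsub (fun i _ hi => Finsupp.notMem_support_iff.1 hi)
      rw [h2, ← Finset.add_sum_erase _ _ hn, ← Finset.add_sum_erase _ (⇑ℓ) hn,
        Finset.sum_congr rfl (fun i hi => happne i (Ne.symm (Finset.mem_erase.1 hi).1)), happn]
      have : (ℓ.support.erase n).sum ⇑ℓ = ∑ x ∈ ℓ.support.erase n, ℓ x := rfl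
      omega
    rw [hfac, mul_assoc]
    congr 1
    rw [← hprod1, Finsupp.multinomial_eq, Nat.multinomial_spec, hsum]
  rw [Finset.mul_sum, Finset.sum_congr rfl key, ← Finset.sum_mul,
    Finsupp.multinomial_eq, Nat.multinomial_spec]
  rw [← Nat.mul_factorial_pred (Nat.lt_of_lt_of_le Nat.zero_lt_one hone).ne']

private lemma dvd_of_mem_support {ℓ : ℕ →₀ ℕ} {n : ℕ} (hn : n ∈ ℓ.support) :
    (2 * n + 1) ^ (ℓ n) ∣ (ℓ.prod fun i k => (2 * i + 1) ^ k) :=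
  Finset.dvd_prod_of_mem (fun a => (2 * a + 1) ^ (ℓ a)) hn

private lemma AA_finite (m : ℕ) : (AA m).Finite := by
  classical
  have hb : AA m ⊆ Set.Iic (Finsupp.indicator (Finset.Icc 1 m) (fun _ _ => 2 * m + 1)) := by
    rintro ℓ ⟨h1, h2⟩
    rw [Set.mem_Iic, Finsupp.le_def]
    intro i
    rcases Nat.eq_zero_or_pos (ℓ i) with h | h
    · simp [h]
    have hi : i ∈ ℓ.support := Finsupp.mem_support_iff.2 (Nat.pos_iff_ne_zero.1 h)
    have hdvd := dvd_of_mem_support hi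
    rw [h2] at hdvd
    have hle : (2 * i + 1) ^ (ℓ i) ≤ 2 * m + 1 := Nat.le_of_dvd (by omega) hdvd
    have h3 : 2 * i + 1 ≤ (2 * i + 1) ^ (ℓ i) := Nat.le_self_pow (by omega) _
    have h4 : ℓ i < 2 ^ (ℓ i) := Nat.lt_two_pow_self
    have h6 : 1 ≤ i := h1 i hi
    have h5 : 2 ^ (ℓ i) ≤ (2 * i + 1) ^ (ℓ i) := Nat.pow_le_pow_left (by omega : 2 ≤ 2 * i + 1) (ℓ i)
    have h8 : 2 * i + 1 ≤ 2 * m + 1 := le_trans h3 hle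
    have h9 : ℓ i ≤ 2 * m + 1 := by
      have := le_trans h5 hle
      omega
    have h7 : i ∈ Finset.Icc 1 m := Finset.mem_Icc.2 ⟨h6, by omega⟩
    rw [Finsupp.indicator_of_mem h7]
    exact h9
  exact (Set.finite_Iic _).subset hb

private lemma AA_zero : AA 0 = {0} := by
  classical
  ext ℓ
  simp only [AA, Set.mem_setOf_eq, Set.mem_singleton_iff]
  constructor
  · rintro ⟨h1, h2⟩
    by_contra hne
    obtain ⟨n, hn⟩ := Finsupp.support_nonempty_iff.2 hne
    have hdvd := dvd_of_mem_support hn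
    rw [h2] at hdvd
    have h4 := Nat.le_of_dvd (by norm_num) hdvd
    have h3 : 2 * n + 1 ≤ (2 * n + 1) ^ (ℓ n) :=
      Nat.le_self_pow (Finsupp.mem_support_iff.1 hn) _
    have h6 := h1 n hn
    omega
  · rintro rfl
    exact ⟨by simp, by simp⟩

private noncomputable def ff (w : ℕ → ℝ) (ℓ : ℕ →₀ ℕ) : ℝ :=
  (Nat.multinomial ℓ.support ℓ : ℝ) * ℓ.prod (fun n k => w n ^ k)

private noncomputable def SS (w : ℕ → ℝ) (m : ℕ) : ℝ :=
  ∑ ℓ ∈ (AA_finite m).toFinset, ff w ℓ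

private noncomputable def kof (ℓ : ℕ →₀ ℕ) (n : ℕ) : ℕ :=
  ((ℓ - Finsupp.single n 1).prod fun i j => (2 * i + 1) ^ j) / 2

private lemma kof_spec {m : ℕ} {ℓ : ℕ →₀ ℕ} (hℓ : ℓ ∈ AA m) {n : ℕ} (hn : n ∈ ℓ.support) :
    2 * kof ℓ n + 1 = ((ℓ - Finsupp.single n 1).prod fun i j => (2 * i + 1) ^ j)
    ∧ kof ℓ n < m ∧ 1 ≤ n ∧ n ≤ m
    ∧ (2 * kof ℓ n + 1) * (2 * n + 1) = 2 * m + 1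
    ∧ (ℓ - Finsupp.single n 1) ∈ AA (kof ℓ n) := by
  classical
  set P := (ℓ - Finsupp.single n 1).prod fun i j => (2 * i + 1) ^ j with hP
  have hsplit : 2 * m + 1 = (2 * n + 1) * P := by
    rw [← hℓ.2, prod_pow_sub_single (fun i => 2 * i + 1) hn]
  have hodd : Odd P := by
    have h1 : Odd (2 * m + 1) := ⟨m, by ring⟩
    rw [hsplit, Nat.odd_mul] at h1
    exact h1.2
  obtain ⟨c, hc⟩ := hodd
  have hk : kof ℓ n = c := by rw [kof, ← hP, hc]; omega
  have hn1 : 1 ≤ n := hℓ.1 n hn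
  have h3 : 3 * P ≤ (2 * n + 1) * P := Nat.mul_le_mul_right P (by omega)
  have h4 : (2 * n + 1) * 1 ≤ (2 * n + 1) * P := Nat.mul_le_mul_left _ (by omega)
  have hkm : kof ℓ n < m := by omega
  have hnm : n ≤ m := by omega
  have h2k : 2 * kof ℓ n + 1 = P := by omega
  refine ⟨h2k, hkm, hn1, hnm, by rw [h2k, mul_comm]; exact hsplit.symm, ?_, ?_⟩
  · exact fun i hi => hℓ.1 i (Finsupp.support_tsub hi)
  · rw [← hP, h2k]

private lemma AA_unstep {k n m : ℕ} (hcond : (2 * k + 1) * (2 * n + 1) = 2 * m + 1)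
    (hn1 : 1 ≤ n) {ℓ' : ℕ →₀ ℕ} (hℓ' : ℓ' ∈ AA k) :
    (ℓ' + Finsupp.single n 1) ∈ AA m ∧ n ∈ (ℓ' + Finsupp.single n 1).support := by
  classical
  refine ⟨⟨?_, ?_⟩, ?_⟩
  · intro i hi
    rcases Finset.mem_union.1 (Finsupp.support_add hi) with h | h
    · exact hℓ'.1 i h
    · have := Finsupp.support_single_subset h
      simp only [Finset.mem_singleton] at this
      omega
  · rw [Finsupp.prod_add_index (fun a _ => pow_zero _) (fun a _ b₁ b₂ => pow_add _ b₁ b₂)]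
    have h1 : (Finsupp.single n 1).prod (fun i j => (2 * i + 1) ^ j) = 2 * n + 1 := by
      simp [Finsupp.prod_single_index]
    rw [h1, hℓ'.2, hcond]
  · rw [Finsupp.mem_support_iff, Finsupp.add_apply, Finsupp.single_apply]
    simp

private lemma SS_rec (w : ℕ → ℝ) {m : ℕ} (hm : 1 ≤ m) :
    SS w m = ∑ k ∈ Finset.range m, ∑ n ∈ Finset.Icc 1 m,
      (if (2 * k + 1) * (2 * n + 1) = 2 * m + 1 then w n * SS w k else 0) := by
  classical
  have stepA : ∀ ℓ ∈ (AA_finite m).toFinset,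
      ff w ℓ = ∑ n ∈ ℓ.support, w n * ff w (ℓ - Finsupp.single n 1) := by
    intro ℓ hℓ
    rw [Set.Finite.mem_toFinset] at hℓ
    have hne : ℓ ≠ 0 := by
      rintro rfl
      have h2 := hℓ.2
      simp at h2
      omega
    rw [ff, ← Finsupp.multinomial_eq, multinomial_rec ℓ hne]
    push_cast
    rw [Finset.sum_mul]
    refine Finset.sum_congr rfl fun n hn => ?_
    rw [prod_pow_sub_single w hn, ff, ← Finsupp.multinomial_eq]
    ring
  have lhs_eq : SS w m = ∑ x ∈ (AA_finite m).toFinset.sigma (fun ℓ => ℓ.support),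
      w x.2 * ff w (x.1 - Finsupp.single x.2 1) := by
    rw [SS, Finset.sum_congr rfl stepA, Finset.sum_sigma]
  set Pf := (Finset.range m ×ˢ Finset.Icc 1 m).filter
      (fun q : ℕ × ℕ => (2 * q.1 + 1) * (2 * q.2 + 1) = 2 * m + 1) with hPf
  have rhs_eq : (∑ k ∈ Finset.range m, ∑ n ∈ Finset.Icc 1 m,
      (if (2 * k + 1) * (2 * n + 1) = 2 * m + 1 then w n * SS w k else 0))
      = ∑ x ∈ Pf.sigma (fun q => (AA_finite q.1).toFinset), w x.1.2 * ff w x.2 := by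
    rw [← Finset.sum_sigma' Pf (fun q => (AA_finite q.1).toFinset) (fun q ℓ' => w q.2 * ff w ℓ'),
      hPf, Finset.sum_filter,
      Finset.sum_product' (f := fun k n => if (2 * k + 1) * (2 * n + 1) = 2 * m + 1
        then ∑ ℓ' ∈ (AA_finite k).toFinset, w n * ff w ℓ' else 0)]
    refine Finset.sum_congr rfl fun k _ => Finset.sum_congr rfl fun n _ => ?_
    split_ifs with h
    · rw [SS, Finset.mul_sum]
    · rfl
  rw [lhs_eq, rhs_eq]
  refine Finset.sum_nbij'
    (fun x => ⟨(kof x.1 x.2, x.2), x.1 - Finsupp.single x.2 1⟩)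
    (fun y => ⟨y.2 + Finsupp.single y.1.2 1, y.1.2⟩) ?_ ?_ ?_ ?_ ?_
  · rintro ⟨ℓ, n⟩ hx
    rw [Finset.mem_sigma, Set.Finite.mem_toFinset] at hx
    obtain ⟨hℓ, hn⟩ := hx
    obtain ⟨-, hkm, hn1, hnm, hcond, hmem⟩ := kof_spec hℓ hn
    rw [Finset.mem_sigma, Set.Finite.mem_toFinset]
    refine ⟨Finset.mem_filter.2 ⟨Finset.mem_product.2 ⟨Finset.mem_range.2 hkm,
      Finset.mem_Icc.2 ⟨hn1, hnm⟩⟩, hcond⟩, hmem⟩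
  · rintro ⟨⟨k, n⟩, ℓ'⟩ hy
    rw [Finset.mem_sigma, Set.Finite.mem_toFinset] at hy
    obtain ⟨hq, hℓ'⟩ := hy
    obtain ⟨hqp, hcond⟩ := Finset.mem_filter.1 hq
    obtain ⟨hk, hn⟩ := Finset.mem_product.1 hqp
    obtain ⟨hmem, hsupp⟩ := AA_unstep hcond (Finset.mem_Icc.1 hn).1 hℓ'
    rw [Finset.mem_sigma, Set.Finite.mem_toFinset]
    exact ⟨hmem, hsupp⟩
  · rintro ⟨ℓ, n⟩ hx
    rw [Finset.mem_sigma, Set.Finite.mem_toFinset] at hx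
    obtain ⟨hℓ, hn⟩ := hx
    simp only
    congr 1
    exact sub_add_single hn
  · rintro ⟨⟨k, n⟩, ℓ'⟩ hy
    rw [Finset.mem_sigma, Set.Finite.mem_toFinset] at hy
    obtain ⟨hq, hℓ'⟩ := hy
    obtain ⟨hqp, hcond⟩ := Finset.mem_filter.1 hq
    have h1 : ℓ' + Finsupp.single n 1 - Finsupp.single n 1 = ℓ' := add_tsub_cancel_right _ _
    have h2 : kof (ℓ' + Finsupp.single n 1) n = k := by
      have hp2 : (ℓ'.prod fun i j => (2 * i + 1) ^ j) = 2 * k + 1 := hℓ'.2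
      rw [kof, h1, hp2]
      omega
    simp only [h1, h2]
  · rintro ⟨ℓ, n⟩ hx
    rfl

theorem closed_form_for_p (e : ℕ → ℝ) (he1 : e 0 ≠ 0) (p : ℕ → ℝ)
    (hp0 : p 0 = 1 / e 0)
    (hrec : ∀ m : ℕ, 1 ≤ m →
      p m = -(1 / e 0) * ∑ k ∈ Finset.range m, ∑ n ∈ Finset.Icc 1 m,
        p k * e n * (if (2 * k + 1) * (2 * n + 1) = 2 * m + 1 then 1 else 0)) :
    ∀ m : ℕ,
      p m = (1 / e 0) *
        ∑ᶠ ℓ ∈ {ℓ : ℕ →₀ ℕ | (∀ n ∈ ℓ.support, 1 ≤ n)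
            ∧ (ℓ.prod fun n k => (2 * n + 1) ^ k) = 2 * m + 1},
          (Nat.multinomial ℓ.support ℓ : ℝ) * ℓ.prod (fun n k => (-e n / e 0) ^ k) := by
  classical
  have hfin : ∀ m : ℕ, (∑ᶠ ℓ ∈ {ℓ : ℕ →₀ ℕ | (∀ n ∈ ℓ.support, 1 ≤ n)
            ∧ (ℓ.prod fun n k => (2 * n + 1) ^ k) = 2 * m + 1},
          (Nat.multinomial ℓ.support ℓ : ℝ) * ℓ.prod (fun n k => (-e n / e 0) ^ k))
      = SS (fun n => -e n / e 0) m := by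
    intro m
    rw [show {ℓ : ℕ →₀ ℕ | (∀ n ∈ ℓ.support, 1 ≤ n)
            ∧ (ℓ.prod fun n k => (2 * n + 1) ^ k) = 2 * m + 1} = AA m from rfl,
      ← Set.Finite.coe_toFinset (AA_finite m), finsum_mem_coe_finset]
    rfl
  intro m
  induction m using Nat.strong_induction_on with
  | _ m IH =>
    rcases Nat.eq_zero_or_pos m with rfl | hm
    · rw [hp0, hfin 0]
      have hset : (AA_finite 0).toFinset = {0} := by
        apply Finset.coe_injective
        rw [Set.Finite.coe_toFinset, AA_zero]
        simp
      have h0 : SS (fun n => -e n / e 0) 0 = 1 := by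
        simp [SS, hset, ff]
      rw [h0, mul_one]
    · rw [hrec m hm, hfin m, SS_rec _ hm, Finset.mul_sum, Finset.mul_sum]
      refine Finset.sum_congr rfl fun k hk => ?_
      rw [Finset.mul_sum, Finset.mul_sum]
      refine Finset.sum_congr rfl fun n hn => ?_
      have hpk : p k = (1 / e 0) * SS (fun n => -e n / e 0) k := by
        rw [IH k (Finset.mem_range.1 hk), hfin k]
      rw [hpk]
      split_ifs with h
      · ring
      · simp
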